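/- The function s(m) := 1 + log((√((1+m)/2) + √((1−m)/2))²) on (−1,1) satisfies s'(m) = −(m/√(1−m²))·(1/(1+√(1−m²))), and s extends continuously to [−1,1] with s(±1) = 1, and s is strictly concave on (−1,1). -/

import Mathlib

/-- The limiting microcanonical entropy at density `ρ = 1`:
`s(m) = 1 + log((√((1+m)/2) + √((1−m)/2))²)`. -/
noncomputable def sEnt (m : ℝ) : ℝ :=
  1 + Real.log ((Real.sqrt ((1 + m)/2) + Real.sqrt ((1 - m)/2)) ^ 2)

private lemma sEnt_eq {m : ℝ} (hm : m ∈ Set.Icc (-1:ℝ) 1) :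
    sEnt m = 1 + Real.log (1 + Real.sqrt (1 - m ^ 2)) := by
  obtain ⟨h1, h2⟩ := hm
  have ha : (0:ℝ) ≤ (1 + m)/2 := by linarith
  have hb : (0:ℝ) ≤ (1 - m)/2 := by linarith
  have h1m : (0:ℝ) ≤ 1 - m ^ 2 := by nlinarith
  have key : (Real.sqrt ((1 + m)/2) + Real.sqrt ((1 - m)/2)) ^ 2
      = 1 + Real.sqrt (1 - m ^ 2) := by
    have hab : Real.sqrt ((1 + m)/2) * Real.sqrt ((1 - m)/2) = Real.sqrt (1 - m ^ 2) / 2 := by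
      rw [← Real.sqrt_mul ha,
        show (1 + m)/2 * ((1 - m)/2) = (1 - m ^ 2) * (1/2) ^ 2 from by ring,
        Real.sqrt_mul h1m, Real.sqrt_sq (by norm_num : (0:ℝ) ≤ 1/2)]
      ring
    rw [add_sq, Real.sq_sqrt ha, Real.sq_sqrt hb, mul_assoc, hab]
    ring
  rw [sEnt, key]

private lemma comp_aux {f g : ℝ → ℝ} {s t : Set ℝ}
    (hg : ConcaveOn ℝ t g) (hg' : StrictMonoOn g t)
    (hf : StrictConcaveOn ℝ s f) (hst : ∀ x ∈ s, f x ∈ t) :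
    StrictConcaveOn ℝ s (fun x => g (f x)) := by
  refine ⟨hf.1, fun x hx y hy hxy a b ha hb hab => ?_⟩
  have hfx := hst x hx
  have hfy := hst y hy
  have hmem : a • f x + b • f y ∈ t := hg.1 hfx hfy ha.le hb.le hab
  calc a • g (f x) + b • g (f y) ≤ g (a • f x + b • f y) :=
        hg.2 hfx hfy ha.le hb.le hab
    _ < g (f (a • x + b • y)) :=
        hg' hmem (hst _ (hf.1 hx hy ha.le hb.le hab)) (hf.2 hx hy hxy ha hb hab)

private lemma strictConcaveOn_congr {f g : ℝ → ℝ} {s : Set ℝ}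
    (hf : StrictConcaveOn ℝ s f) (h : Set.EqOn f g s) : StrictConcaveOn ℝ s g := by
  refine ⟨hf.1, fun x hx y hy hxy a b ha hb hab => ?_⟩
  rw [← h hx, ← h hy, ← h (hf.1 hx hy ha.le hb.le hab)]
  exact hf.2 hx hy hxy ha hb hab

/-- On `(-1,1)`, `s'(m) = −(m/√(1−m²))·(1/(1+√(1−m²)))`; `s` is continuous on `[−1,1]`
with `s(±1) = 1`; and `s` is strictly concave on `(−1,1)`. -/
theorem sEnt_properties :
    (∀ m ∈ Set.Ioo (-1:ℝ) 1,
        HasDerivAt sEnt (-(m / Real.sqrt (1 - m ^ 2)) * (1 / (1 + Real.sqrt (1 - m ^ 2)))) m) ∧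
    ContinuousOn sEnt (Set.Icc (-1:ℝ) 1) ∧ sEnt 1 = 1 ∧ sEnt (-1) = 1 ∧
    StrictConcaveOn ℝ (Set.Ioo (-1:ℝ) 1) sEnt := by
  set F : ℝ → ℝ := fun m => 1 + Real.log (1 + Real.sqrt (1 - m ^ 2)) with hF
  have hEq : Set.EqOn sEnt F (Set.Icc (-1:ℝ) 1) := fun m hm => sEnt_eq hm
  refine ⟨?_, ?_, ?_, ?_, ?_⟩
  · -- derivative
    intro m hm
    obtain ⟨h1, h2⟩ := hm
    have hu : (0:ℝ) < 1 - m ^ 2 := by nlinarith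
    have hsu : (0:ℝ) < Real.sqrt (1 - m ^ 2) := Real.sqrt_pos.2 hu
    have hD1 : HasDerivAt (fun x : ℝ => 1 - x ^ 2) (-(2 * m)) m := by
      simpa using (hasDerivAt_pow 2 m).const_sub 1
    have hD2 : HasDerivAt (fun x : ℝ => Real.sqrt (1 - x ^ 2))
        (1 / (2 * Real.sqrt (1 - m ^ 2)) * -(2 * m)) m :=
      (Real.hasDerivAt_sqrt hu.ne').comp m hD1
    have hD3 : HasDerivAt (fun x : ℝ => 1 + Real.sqrt (1 - x ^ 2))
        (1 / (2 * Real.sqrt (1 - m ^ 2)) * -(2 * m)) m := hD2.const_add 1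
    have hne : 1 + Real.sqrt (1 - m ^ 2) ≠ 0 := by positivity
    have hD4 : HasDerivAt F
        ((1 / (2 * Real.sqrt (1 - m ^ 2)) * -(2 * m)) / (1 + Real.sqrt (1 - m ^ 2))) m :=
      (hD3.log hne).const_add 1
    have heq : sEnt =ᶠ[nhds m] F :=
      Filter.eventuallyEq_of_mem (isOpen_Ioo.mem_nhds ⟨h1, h2⟩)
        (fun x hx => hEq (Set.Ioo_subset_Icc_self hx))
    have := hD4.congr_of_eventuallyEq heq
    refine this.congr_deriv ?_
    field_simp
  · -- continuity
    refine ContinuousOn.congr ?_ hEq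
    refine continuousOn_const.add (ContinuousOn.log ?_ ?_)
    · exact continuousOn_const.add
        (Real.continuous_sqrt.comp_continuousOn
          (continuousOn_const.sub (continuousOn_pow 2)))
    · intro m _
      positivity
  · -- sEnt 1 = 1
    rw [sEnt]
    norm_num
  · -- sEnt (-1) = 1
    rw [sEnt]
    norm_num
  · -- strict concavity
    have h1 : StrictConcaveOn ℝ (Set.Ioo (-1:ℝ) 1) (fun m : ℝ => 1 - m ^ 2) := by
      have h := ((Even.strictConvexOn_pow even_two two_ne_zero).neg.add_const 1).subset
        (Set.subset_univ (Set.Ioo (-1:ℝ) 1)) (convex_Ioo (-1:ℝ) 1)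
      refine strictConcaveOn_congr h fun x _ => by simp; ring
    have h2 : StrictConcaveOn ℝ (Set.Ioo (-1:ℝ) 1)
        (fun m : ℝ => Real.sqrt (1 - m ^ 2)) := by
      refine comp_aux Real.strictConcaveOn_sqrt.concaveOn
        (fun a ha b hb hab => (Real.sqrt_lt_sqrt_iff ha).2 hab) h1 ?_
      intro x hx
      obtain ⟨hx1, hx2⟩ := hx
      have : (0:ℝ) ≤ 1 - x ^ 2 := by nlinarith
      exact this
    have h3 : StrictConcaveOn ℝ (Set.Ioo (-1:ℝ) 1)
        (fun m : ℝ => Real.log (1 + Real.sqrt (1 - m ^ 2))) := by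
      refine comp_aux (strictConcaveOn_log_Ioi.concaveOn) Real.strictMonoOn_log
        (strictConcaveOn_congr (h2.add_const 1) fun x _ => by simp [add_comm]) ?_
      intro x _
      have : (0:ℝ) ≤ Real.sqrt (1 - x ^ 2) := Real.sqrt_nonneg _
      exact Set.mem_Ioi.2 (by linarith)
    have h4 := h3.add_const 1
    refine strictConcaveOn_congr ?_ fun x hx => (hEq (Set.Ioo_subset_Icc_self hx)).symm
    exact strictConcaveOn_congr h4 fun x _ => by simp [hF, add_comm]
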